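/- Let ‖·‖ be a semi-norm on ℝʳ (the Thurston norm on H¹(M;ℝ)), let β : {1,…,r} → ℤ be given (relative Bennequin numbers), and suppose: (a) for each standard basis vector e⁽ⁱ⁾, ‖e⁽ⁱ⁾‖ = β(i) ≥ 0 and β(i) ≤ ‖e⁽ⁱ⁾‖, and (b) ∑ᵢ β(i) = ‖∑ᵢ e⁽ⁱ⁾‖. Then for every C = (C₁,…,C_r) with Cᵢ ≥ 0, we have ∑ᵢ Cᵢβ(i) = ‖C‖. -/

import Mathlib

/-- If the relative Bennequin inequality is an equality at each basis point and at
`(1,…,1)`, then the semi-norm (Thurston norm) equals the linear functional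
`∑ Cᵢ β(i)` on the nonnegative orthant. -/
theorem seminorm_eq_linear_of_eq_at_basis_and_ones (r : ℕ)
    (p : Seminorm ℝ (Fin r → ℝ)) (β : Fin r → ℤ)
    (hβ : ∀ i, p (Pi.single i (1 : ℝ)) = (β i : ℝ)) (hβ0 : ∀ i, 0 ≤ β i)
    (hsum : (∑ i, (β i : ℝ)) = p (∑ i, Pi.single i (1 : ℝ)))
    (C : Fin r → ℝ) (hC : ∀ i, 0 ≤ C i) :
    ∑ i, C i * (β i : ℝ) = p (∑ i, C i • (Pi.single i (1 : ℝ) : Fin r → ℝ)) := by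
  classical
  set e : Fin r → (Fin r → ℝ) := fun i => Pi.single i (1 : ℝ) with he
  have hupper : ∀ D : Fin r → ℝ, (∀ i, 0 ≤ D i) →
      p (∑ i, D i • e i) ≤ ∑ i, D i * (β i : ℝ) := by
    intro D hD
    calc p (∑ i, D i • e i) ≤ ∑ i, p (D i • e i) :=
          Finset.le_sum_of_subadditive p (map_zero p).le (map_add_le_add p) _ _
      _ = ∑ i, D i * (β i : ℝ) := by
          refine Finset.sum_congr rfl fun i _ => ?_
          rw [map_smul_eq_mul, Real.norm_of_nonneg (hD i), hβ i]
  have h1 := hupper C hC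
  set M : ℝ := ∑ j, C j with hMdef
  have hM0 : 0 ≤ M := Finset.sum_nonneg fun j _ => hC j
  have hMC : ∀ i, C i ≤ M := fun i =>
    Finset.single_le_sum (fun j _ => hC j) (Finset.mem_univ i)
  have hsplit : (∑ i, C i • e i) + (∑ i, (M - C i) • e i) = M • ∑ i, e i := by
    rw [Finset.smul_sum, ← Finset.sum_add_distrib]
    refine Finset.sum_congr rfl fun i _ => ?_
    rw [← add_smul]
    ring_nf
  have h2 : p (M • ∑ i, e i) ≤ p (∑ i, C i • e i) + p (∑ i, (M - C i) • e i) := by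
    rw [← hsplit]; exact map_add_le_add p _ _
  have h3 : p (∑ i, (M - C i) • e i) ≤ ∑ i, (M - C i) * (β i : ℝ) :=
    hupper _ fun i => sub_nonneg.2 (hMC i)
  have h4 : p (M • ∑ i, e i) = M * ∑ i, (β i : ℝ) := by
    rw [map_smul_eq_mul, Real.norm_of_nonneg hM0, ← hsum]
  have h5 : ∑ i, (M - C i) * (β i : ℝ) = M * (∑ i, (β i : ℝ)) - ∑ i, C i * (β i : ℝ) := by
    rw [Finset.mul_sum, ← Finset.sum_sub_distrib]
    exact Finset.sum_congr rfl fun i _ => by ring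
  linarith
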